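/- Let G = (Ξ, Σ, Δ) be a grammar, X ∈ Ξ a nonterminal, k > 0, and w ∈ Σ*. Then there exists a k-index step sequence deriving w from X if and only if there exists a k-index depth-first step sequence deriving w from X. -/

import Mathlib

namespace Paper

/-- A word over nonterminals `N` and terminals `T`. -/
abbrev Word (N T : Type) := List (N ⊕ T)

/-- A production of a grammar. -/
abbrev CProd (N T : Type) := N × Word N T

/-- A grammar, given by its set of productions. -/
structure CFG (N T : Type) where
  prods : Set (CProd N T)

variable {N T : Type}

/-- number of occurrences of nonterminals in a word -/
def ntCount (u : Word N T) : ℕ := (u.filter (fun s => s.isLeft)).length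

/-- number of occurrences of terminals in a word -/
def tCount (u : Word N T) : ℕ := (u.filter (fun s => s.isRight)).length

/-- the result of applying production `p` at position `j` of `u` -/
def applyProd (p : CProd N T) (j : ℕ) (u : Word N T) : Word N T :=
  u.take j ++ p.2 ++ u.drop (j + 1)

/-- `KSeq G k u γjs v`: a step sequence from `u` to `v` applying the indicated
productions at the indicated positions, in which every word (including `u`, `v`)
has at most `k` occurrences of nonterminals (`k = ⊤` places no restriction). -/
inductive KSeq (G : CFG N T) (k : ℕ∞) : Word N T → List (CProd N T × ℕ) → Word N T → Prop
  | refl (u : Word N T) : (ntCount u : ℕ∞) ≤ k → KSeq G k u [] u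
  | step {u v : Word N T} {p : CProd N T} {j : ℕ} {rest : List (CProd N T × ℕ)} :
      (ntCount u : ℕ∞) ≤ k → p ∈ G.prods → u[j]? = some (Sum.inl p.1) →
      KSeq G k (applyProd p j u) rest v → KSeq G k u ((p, j) :: rest) v

/-- words annotated with the index of the step at which each symbol occurrence appeared -/
abbrev AWord (N T : Type) := List ((N ⊕ T) × ℕ)

def strip (u : AWord N T) : Word N T := u.map Prod.fst

def ntCountA (u : AWord N T) : ℕ := (u.filter (fun s => s.1.isLeft)).length

def applyProdA (p : CProd N T) (j m : ℕ) (u : AWord N T) : AWord N T :=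
  u.take j ++ p.2.map (fun s => (s, m)) ++ u.drop (j + 1)

/-- the depth-first condition: position `j` carries a maximal first-appearance
index among the nonterminal occurrences of `u` -/
def dfOK (u : AWord N T) (j : ℕ) : Prop :=
  ∀ i x o, u[(i : ℕ)]? = some (Sum.inl x, o) → ∀ s oj, u[j]? = some (s, oj) → o ≤ oj

/-- `DFSeq G k m u γjs v`: a `k`-index depth-first step sequence on annotated words,
where `m` is the index (in the whole sequence) of the current word `u`. -/
inductive DFSeq (G : CFG N T) (k : ℕ∞) : ℕ → AWord N T → List (CProd N T × ℕ) → AWord N T → Prop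
  | refl (m : ℕ) (u : AWord N T) : (ntCountA u : ℕ∞) ≤ k → DFSeq G k m u [] u
  | step {m : ℕ} {u v : AWord N T} {p : CProd N T} {j o : ℕ} {rest : List (CProd N T × ℕ)} :
      (ntCountA u : ℕ∞) ≤ k → p ∈ G.prods → u[j]? = some (Sum.inl p.1, o) →
      dfOK u j →
      DFSeq G k (m + 1) (applyProdA p j (m + 1) u) rest v →
      DFSeq G k m u ((p, j) :: rest) v

/-- `u ⇒^γ v` by a `k`-index step sequence (positions existentially quantified). -/
def CtrlSeq (G : CFG N T) (k : ℕ∞) (u : Word N T) (γ : List (CProd N T)) (v : Word N T) : Prop :=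
  ∃ js : List ℕ, js.length = γ.length ∧ KSeq G k u (γ.zip js) v

/-- annotate a word as an initial word of a step sequence -/
def annot (u : Word N T) : AWord N T := u.map (fun s => (s, 0))

/-- `u ⇒^γ v` by a `k`-index depth-first step sequence starting at `u`. -/
def DFCtrlFrom (G : CFG N T) (k : ℕ∞) (u : Word N T) (γ : List (CProd N T)) (v : Word N T) :
    Prop :=
  ∃ (js : List ℕ) (va : AWord N T),
    js.length = γ.length ∧ DFSeq G k 0 (annot u) (γ.zip js) va ∧ strip va = v

/-- embedding of terminal words -/
def tw (w : List T) : Word N T := w.map Sum.inr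

/-- the sentential word `u Y v` where `u, v` are terminal and `Y` is an optional nonterminal -/
def sent (u : List T) (Y : Option N) (v : List T) : Word N T :=
  tw u ++ (Y.elim [] (fun y => [Sum.inl y])) ++ tw v

/-- `L^{(k)}_{X,Y}(G) = { u·v | X ⇒* u Y v by a k-index step sequence }`;
`Y = none` stands for `ε`. -/
def LKY (G : CFG N T) (k : ℕ∞) (X : N) (Y : Option N) : Set (List T) :=
  {w | ∃ u v γ, w = u ++ v ∧ CtrlSeq G k [Sum.inl X] γ (sent u Y v)}

/-- `L_X(G)` -/
def Lang (G : CFG N T) (X : N) : Set (List T) := LKY G ⊤ X none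

/-- `L^{(k)}_X(G)` -/
def LangK (G : CFG N T) (k : ℕ) (X : N) : Set (List T) := LKY G (k : ℕ∞) X none

/-- `Γ^{df(k)}_{X,Y}(G)`: control words of `k`-index depth-first step sequences `X ⇒^γ u Y v`. -/
def GammaDF (G : CFG N T) (k : ℕ) (X : N) (Y : Option N) : Set (List (CProd N T)) :=
  {γ | ∃ u v : List T, DFCtrlFrom G (k : ℕ∞) [Sum.inl X] γ (sent u Y v)}

/-- `L̂_{X,Y}(Γ, G)` -/
def LHat (G : CFG N T) (Γ : Set (List (CProd N T))) (X : N) (Y : Option N) : Set (List T) :=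
  {w | ∃ u v, w = u ++ v ∧ ∃ γ ∈ Γ, CtrlSeq G ⊤ [Sum.inl X] γ (sent u Y v)}

/-- the language of the bounded expression `w₁* ⋯ w_d*` -/
def BLang {α : Type} : List (List α) → Set (List α)
  | [] => {[]}
  | w :: ws => {u | ∃ (n : ℕ) (v : List α), v ∈ BLang ws ∧ u = (List.replicate n w).flatten ++ v}

/-- the words of a bounded expression must be nonempty -/
def IsBExpr {α : Type} (ws : List (List α)) : Prop := ∀ w ∈ ws, w ≠ []

/-- the language of the letter-bounded expression `a₁* ⋯ a_d*` -/
def letterLang {α : Type} (as : List α) : Set (List α) := BLang (as.map (fun a => [a]))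

/-- the language `a_i* ⋯ a_j*` (0-indexed segment of `as` from `i` to `j` inclusive) -/
def segLang {α : Type} (as : List α) (i j : ℕ) : Set (List α) :=
  letterLang ((as.drop i).take (j - i + 1))

end Paper

namespace Paper

variable {N T : Type}

/-- ranked words over the nonterminals -/
abbrev RW (N : Type) := List (N × ℕ)

/-- the set of rank values is downward closed (equivalently, of the form `{0, …, m}`
when nonempty) -/
def contiguousRanks (q : RW N) : Prop := ∀ p ∈ q, ∀ j ≤ p.2, ∃ x : N, (x, j) ∈ q

/-- vertices of the graph `A^{df(k)}_G` -/
def IsVertex (k : ℕ) (q : RW N) : Prop :=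
  q.length ≤ k ∧ contiguousRanks q ∧ List.Pairwise (· ≤ ·) (q.map Prod.snd)

/-- `w↓Ξ` : projection of a word to its nonterminals -/
def ntProj (w : Word N T) : List N := w.filterMap Sum.getLeft?

open Classical in
/-- the rank given to the nonterminals produced by a step rewriting a nonterminal
of maximal rank `i`, where `uv` is the rest of the ranked word -/
noncomputable def newRank (uv : RW N) (i : ℕ) : ℕ :=
  if uv = [] then 0 else if ∀ p ∈ uv, p.2 ≠ i then i else i + 1

/-- the edge relation of the graph `A^{df(k)}_G` -/
def Edge (G : CFG N T) (k : ℕ) (q : RW N) (p : CProd N T) (q' : RW N) : Prop :=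
  p ∈ G.prods ∧ IsVertex k q ∧ IsVertex k q' ∧
  ∃ (u v : RW N) (i : ℕ), q = u ++ [(p.1, i)] ++ v ∧ (∀ x ∈ q, x.2 ≤ i) ∧
    q' = u ++ v ++ (ntProj p.2).map (fun X => (X, newRank (u ++ v) i))

/-- paths in a labeled graph, recording the sequence of edge labels -/
inductive GPath {V E : Type} (edge : V → E → V → Prop) : V → List E → V → Prop
  | refl (v : V) : GPath edge v [] v
  | step {v v' v'' : V} {e : E} {es : List E} :
      edge v e v' → GPath edge v' es v'' → GPath edge v (e :: es) v''

/-- paths recording the successive vertices as well -/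
inductive VPath {V E : Type} (edge : V → E → V → Prop) : V → List (E × V) → Prop
  | refl (v : V) : VPath edge v []
  | step {v v' : V} {e : E} {rest : List (E × V)} :
      edge v e v' → VPath edge v' rest → VPath edge v ((e, v') :: rest)

/-- endpoint of a path starting at `q` -/
def pend {V E : Type} (q : V) (π : List (E × V)) : V := (π.map Prod.snd).getLastD q

/-- a path is acyclic iff it visits no vertex twice -/
def AcyclicFrom {V E : Type} (q : V) (π : List (E × V)) : Prop :=
  (q :: π.map Prod.snd).Nodup

/-- `Decomp edge q pairs fin` asserts that the path obtained by concatenating, in order,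
the segments of `pairs` (each an acyclic segment followed by a cycle) and `fin` is a valid
path from `q`, alternating acyclic segments `ς_j` and cycles `θ_j`. -/
def Decomp {V E : Type} (edge : V → E → V → Prop) :
    V → List (List (E × V) × List (E × V)) → List (E × V) → Prop
  | q, [], fin => VPath edge q fin ∧ AcyclicFrom q fin
  | q, (σ, θ) :: rest, fin =>
      VPath edge q σ ∧ AcyclicFrom q σ ∧
      VPath edge (pend q σ) θ ∧ pend (pend q σ) θ = pend q σ ∧
      Decomp edge (pend q σ) rest fin

/-- `|γ|_a`: total number of occurrences of the terminal `a` in the right-hand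
sides of the productions of the control word `γ` -/
def projCnt {A : Type} [DecidableEq A] (γ : List (CProd N A)) (a : A) : ℕ :=
  ((γ.map (fun p => p.2)).flatten.filterMap Sum.getRight?).count a

/-- `proj(γ) = a₁^{|γ|_{a₁}} ⋯ a_s^{|γ|_{a_s}}` -/
def projW {A : Type} [DecidableEq A] (as : List A) (γ : List (CProd N A)) : List A :=
  (as.map (fun a => List.replicate (projCnt γ a) a)).flatten

end Paper

namespace Paper

variable {N T : Type}

/-- a grammar is in 2-normal form -/
def TwoNF (G : CFG N T) : Prop := ∀ p ∈ G.prods, p.2.length ≤ 2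

/-- states of the automaton/grammar `G^b`: `(s, i)` encodes `q^{(s+1)}_{i+1}`,
i.e. position `i` (0-indexed) inside the block `s` (0-indexed) -/
abbrev QB : Type := ℕ × ℕ

/-- `ℓ_s`: length of the `s`-th word of the bounded expression -/
def lenB (ws : List (List T)) (s : ℕ) : ℕ := (ws.getD s []).length

/-- the `i`-th letter of the `s`-th word -/
def letterB (ws : List (List T)) (s i : ℕ) : Option T := (ws.getD s [])[i]?

/-- the productions of the grammar `G^b` generating the bounded expression `b` -/
def DeltaB (ws : List (List T)) : Set (CProd QB T) :=
  {p | (∃ s i a, s < ws.length ∧ i + 1 < lenB ws s ∧ letterB ws s i = some a ∧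
          p = ((s, i), [Sum.inr a, Sum.inl (s, i + 1)]))
     ∨ (∃ s s' a, s ≤ s' ∧ s' < ws.length ∧
          letterB ws s (lenB ws s - 1) = some a ∧
          p = ((s, lenB ws s - 1), [Sum.inr a, Sum.inl (s', 0)]))
     ∨ (∃ s, s < ws.length ∧ p = ((s, 0), ([] : Word QB T)))}

/-- the grammar `G^b` -/
def GB (ws : List (List T)) : CFG QB T := ⟨DeltaB ws⟩

/-- nonterminals `[q X q']` of the product grammar `G^∩` -/
abbrev NI (N : Type) : Type := QB × N × QB

/-- `q ∈ Ξ^b` -/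
def ValidQ (ws : List (List T)) (q : QB) : Prop :=
  q.1 < ws.length ∧ q.2 < lenB ws q.1

/-- `[q X q'] ∈ Ξ^∩`: both states valid and blocks in order -/
def ValidNI (ws : List (List T)) (n : NI N) : Prop :=
  ValidQ ws n.1 ∧ ValidQ ws n.2.2 ∧ n.1.1 ≤ n.2.2.1

/-- `q ⇒* w·q'` in `G^b` -/
def DerB (ws : List (List T)) (q : QB) (w : List T) (q' : QB) : Prop :=
  ∃ γ, CtrlSeq (GB ws) ⊤ [Sum.inl q] γ (tw w ++ [Sum.inl q'])

/-- the productions `Δ^∩` of the product grammar `G^∩` -/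
def DeltaI (G : CFG N T) (ws : List (List T)) : Set (CProd (NI N) T) :=
  {pp | ∃ (q q' : QB) (X : N), ValidNI ws (q, X, q') ∧
     ((∃ w : List T, (X, tw w) ∈ G.prods ∧ DerB ws q w q' ∧
         pp = ((q, X, q'), tw w)) ∨
      (∃ Y : N, (X, [Sum.inl Y]) ∈ G.prods ∧
         pp = ((q, X, q'), [Sum.inl ((q, Y, q') : NI N)])) ∨
      (∃ (a : T) (Y : N) (qm : QB), (X, [Sum.inr a, Sum.inl Y]) ∈ G.prods ∧
         ((q, [Sum.inr a, Sum.inl qm]) : CProd QB T) ∈ DeltaB ws ∧ ValidNI ws (qm, Y, q') ∧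
         pp = ((q, X, q'), [Sum.inr a, Sum.inl ((qm, Y, q') : NI N)])) ∨
      (∃ (a : T) (Y : N) (qm : QB), (X, [Sum.inl Y, Sum.inr a]) ∈ G.prods ∧
         ((qm, [Sum.inr a, Sum.inl q']) : CProd QB T) ∈ DeltaB ws ∧ ValidNI ws (q, Y, qm) ∧
         pp = ((q, X, q'), [Sum.inl ((q, Y, qm) : NI N), Sum.inr a])) ∨
      (∃ (Y Z : N) (qm : QB), (X, [Sum.inl Y, Sum.inl Z]) ∈ G.prods ∧
         ValidNI ws (q, Y, qm) ∧ ValidNI ws (qm, Z, q') ∧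
         pp = ((q, X, q'), [Sum.inl ((q, Y, qm) : NI N), Sum.inl ((qm, Z, q') : NI N)])))}

/-- the product grammar `G^∩` -/
def GI (G : CFG N T) (ws : List (List T)) : CFG (NI N) T := ⟨DeltaI G ws⟩

/-- `ζ` on symbols -/
def zetaS : (NI N ⊕ T) → (N ⊕ T) := Sum.map (fun n => n.2.1) id

/-- `ζ` on productions -/
def zetaP (p : CProd (NI N) T) : CProd N T := (p.1.2.1, p.2.map zetaS)

/-- `ζ` on control words -/
def zetaC (γ : List (CProd (NI N) T)) : List (CProd N T) := γ.map zetaP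

/-- the intermediate state of the (unique, shortest) two-step run of `G^b` from the
left state of `h` to its right state; when the first step wraps, the least possible
intermediate block is chosen -/
noncomputable def iotaMid (ws : List (List T)) (h : NI N) (a b : T) : QB :=
  if h.1.2 + 1 < lenB ws h.1.1 then (h.1.1, h.1.2 + 1)
  else (sInf {y : ℕ | (((h.1.1, h.1.2), [Sum.inr a, Sum.inl ((y, 0) : QB)]) : CProd QB T) ∈ DeltaB ws ∧
                (((y, 0), [Sum.inr b, Sum.inl (h.2.2 : QB)]) : CProd QB T) ∈ DeltaB ws}, 0)

/-- `ι` on right-hand sides: relabels terminals by the indices (0-indexed) of the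
blocks of `b` completed by the corresponding moves of `G^b`; `h` is the head of the
production -/
noncomputable def iotaRhs (ws : List (List T)) (h : NI N) :
    Word (NI N) T → Word (NI N) ℕ
  | [] => []
  | [Sum.inr _] => if h.2.2.2 = 0 then [Sum.inr h.1.1] else []
  | [Sum.inr a, Sum.inr b] =>
      (if (iotaMid ws h a b).2 = 0 then [Sum.inr h.1.1] else []) ++
      (if h.2.2.2 = 0 then [Sum.inr (iotaMid ws h a b).1] else [])
  | [Sum.inr _, Sum.inl m] => (if m.1.2 = 0 then [Sum.inr h.1.1] else []) ++ [Sum.inl m]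
  | [Sum.inl m, Sum.inr _] => [Sum.inl m] ++ (if h.2.2.2 = 0 then [Sum.inr m.2.2.1] else [])
  | other => other.map (Sum.map id (fun _ => 0))

/-- the map `ι : Δ^∩ → Δ^⋈` -/
noncomputable def iota (ws : List (List T)) (p : CProd (NI N) T) : CProd (NI N) ℕ :=
  (p.1, iotaRhs ws p.1 p.2)

/-- the grammar `G^⋈`, whose terminals are the (0-indexed) letters `a₁, …, a_d`
represented by natural numbers -/
noncomputable def GBow (G : CFG N T) (ws : List (List T)) : CFG (NI N) ℕ :=
  ⟨iota ws '' DeltaI G ws⟩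

end Paper

namespace Paper

variable {N A : Type}

/-- `Ξ̂`: nonterminals producing some word starting with `a₁` and some word ending
with `a_d` -/
def XiHat (G : CFG N A) (a1 ad : A) : Set N :=
  {Y | (∃ w ∈ Lang G Y, ∃ v, w = a1 :: v) ∧ (∃ w ∈ Lang G Y, ∃ v, w = v ++ [ad])}

/-- the grammar `G^♯` (here `S = Ξ̂`, and `Ξ̌` is its complement) -/
def GSharp (G : CFG N A) (S : Set N) : CFG N A :=
  ⟨{p | p ∈ G.prods ∧ p.1 ∉ S} ∪
   {p | p ∈ G.prods ∧ p.1 ∈ S ∧ ∃ (u : Word N A) (Xr : N) (v : Word N A),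
      Xr ∈ S ∧ p.2 = u ++ [Sum.inl Xr] ++ v}⟩

/-- the grammar `G_{i,w}` for a pivot production `piv` (here `S = Ξ̂`) -/
def GPivot (G : CFG N A) (S : Set N) (piv : CProd N A) : CFG N A :=
  ⟨{p | p ∈ G.prods ∧ p.1 ∉ S} ∪ {piv}⟩

/-- `G` is reduced for `X` -/
def Reduced (G : CFG N A) (X : N) : Prop :=
  ∀ Y : N, Y ≠ X → (LKY G ⊤ X (some Y)).Nonempty ∧ (Lang G Y).Nonempty

/-- `a₁* ⋯ a_d*` (given by the list `as`) is the minimal strict letter-bounded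
expression for `L_X(G)` -/
def MinimalLB (G : CFG N A) (X : N) (as : List A) : Prop :=
  Lang G X ⊆ letterLang as ∧ ∀ i < as.length, ¬ (Lang G X ⊆ letterLang (as.eraseIdx i))

/-- a symbol of `A ∪ {ε}` as a word -/
def optT (a : Option A) : Word N A := a.elim [] (fun x => [Sum.inr x])

/-- a symbol of `Ξ ∪ {ε}` as a word -/
def optN (y : Option N) : Word N A := y.elim [] (fun x => [Sum.inl x])

/-- `y ⇒^γ u_y` is a (possibly empty) `k`-index depth-first derivation, where
`y ∈ Ξ ∪ {ε}`; for `y = ε` the derivation is empty -/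
def optDFDer (H : CFG N A) (k : ℕ) (y : Option N) (γ : List (CProd N A)) : Prop :=
  match y with
  | some Y => ∃ w : List A, DFCtrlFrom H (k : ℕ∞) [Sum.inl Y] γ (tw w)
  | none => γ = []

/-- the grammar `G_k` with productions `X_i → X_{i-1} X_{i-1}` (1 ≤ i ≤ k) and `X_0 → a` -/
def Gk (k : ℕ) : CFG ℕ Unit :=
  ⟨{p | (∃ i, 1 ≤ i ∧ i ≤ k ∧ p = (i, [Sum.inl (i - 1), Sum.inl (i - 1)])) ∨
        p = (0, [Sum.inr ()])}⟩

end Paper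

namespace Paper

variable {N T : Type}

/-! ### Auxiliary lemmas for Statement 0 -/

theorem ntCount_cons (a : N ⊕ T) (u : Word N T) :
    ntCount (a :: u) = (if a.isLeft then 1 else 0) + ntCount u := by
  by_cases h : a.isLeft <;> simp [ntCount, List.filter_cons, h, Nat.add_comm]

theorem ntCount_append (u v : Word N T) : ntCount (u ++ v) = ntCount u + ntCount v := by
  simp [ntCount, List.filter_append]

theorem ntCountA_eq (ua : AWord N T) : ntCountA ua = ntCount (strip ua) := by
  induction ua with
  | nil => rfl
  | cons a l ih =>
      by_cases h : a.1.isLeft <;>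
        simp [ntCountA, ntCount, strip, List.filter_cons, h] at ih ⊢ <;> omega

theorem strip_append (u v : AWord N T) : strip (u ++ v) = strip u ++ strip v := by
  simp [strip]

theorem strip_take (u : AWord N T) (n : ℕ) : strip (u.take n) = (strip u).take n := by
  simp [strip, List.map_take]

theorem strip_drop (u : AWord N T) (n : ℕ) : strip (u.drop n) = (strip u).drop n := by
  simp [strip, List.map_drop]

theorem strip_applyProdA (p : CProd N T) (j m : ℕ) (ua : AWord N T) :
    strip (applyProdA p j m ua) = applyProd p j (strip ua) := by
  simp [strip, applyProdA, applyProd, List.map_take, List.map_drop, Function.comp_def]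

theorem strip_get?_of {ua : AWord N T} {j : ℕ} {s o} (h : ua[j]? = some (s, o)) :
    (strip ua)[j]? = some s := by
  simp [strip, List.getElem?_map, h]

theorem exists_get?_of_strip {ua : AWord N T} {j : ℕ} {s} (h : (strip ua)[j]? = some s) :
    ∃ o, ua[j]? = some (s, o) := by
  simp only [strip, List.getElem?_map] at h
  rcases h' : ua[j]? with _ | ⟨s', o⟩ <;> rw [h'] at h <;> simp at h
  exact ⟨o, by simp [h', h]⟩

theorem strip_annot (u : Word N T) : strip (annot u) = u := by
  simp [strip, annot, Function.comp_def]

theorem eq_take_cons_drop {α : Type*} :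
    ∀ (u : List α) (j : ℕ) {s : α}, u[j]? = some s → u = u.take j ++ s :: u.drop (j + 1)
  | [], j, s, h => by simp at h
  | a :: u, 0, s, h => by simp_all
  | a :: u, j + 1, s, h => by
      have := eq_take_cons_drop u j (by simpa using h)
      simpa using this

theorem one_le_ntCount {u : Word N T} {j : ℕ} {x : N} (h : u[j]? = some (Sum.inl x)) :
    1 ≤ ntCount u := by
  have hm : (Sum.inl x : N ⊕ T) ∈ u := List.mem_of_getElem? h
  have : (Sum.inl x : N ⊕ T) ∈ u.filter (fun s => s.isLeft) := List.mem_filter.2 ⟨hm, rfl⟩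
  have := List.length_pos_iff.2 (List.ne_nil_of_mem this)
  exact this

theorem exists_inl_of_ntCount {u : Word N T} (h : 1 ≤ ntCount u) :
    ∃ j x, u[(j : ℕ)]? = some (Sum.inl x) := by
  have : u.filter (fun s => s.isLeft) ≠ [] := by
    intro e; rw [ntCount, e] at h; simp at h
  obtain ⟨s, hs⟩ := List.exists_mem_of_ne_nil _ this
  have hs' := List.mem_filter.1 hs
  obtain ⟨x, rfl⟩ : ∃ x, s = Sum.inl x := by
    cases s with
    | inl x => exact ⟨x, rfl⟩
    | inr t => simp at hs'
  obtain ⟨j, hj⟩ := List.getElem?_of_mem hs'.1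
  exact ⟨j, x, hj⟩

theorem exists_two_inl {u : Word N T} (h : 2 ≤ ntCount u) :
    ∃ j1 j2, j1 ≠ j2 ∧ (∃ x, u[(j1 : ℕ)]? = some (Sum.inl x)) ∧
      (∃ x, u[(j2 : ℕ)]? = some (Sum.inl x)) := by
  induction u with
  | nil => simp [ntCount] at h
  | cons a u ih =>
      cases a with
      | inl x =>
          have h1 : 1 ≤ ntCount u := by
            rw [ntCount_cons] at h; simp at h; omega
          obtain ⟨j, y, hj⟩ := exists_inl_of_ntCount h1
          exact ⟨0, j + 1, by omega, ⟨x, rfl⟩, ⟨y, by simpa using hj⟩⟩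
      | inr t =>
          have h2 : 2 ≤ ntCount u := by rw [ntCount_cons] at h; simpa using h
          obtain ⟨j1, j2, hne, hx, hy⟩ := ih h2
          exact ⟨j1 + 1, j2 + 1, by omega, by simpa using hx, by simpa using hy⟩

theorem ntCount_join : ∀ ws : List (Word N T), ntCount ws.flatten = (ws.map ntCount).sum
  | [] => rfl
  | w :: ws => by simp [ntCount_append, ntCount_join ws]

theorem ntCount_zero_not_mem {w : AWord N T} (h : ntCount (strip w) = 0) {x : N} {o : ℕ}
    (hm : (Sum.inl x, o) ∈ w) : False := by
  rw [← ntCountA_eq] at h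
  have : (Sum.inl x, o) ∈ w.filter (fun s => s.1.isLeft) := List.mem_filter.2 ⟨hm, rfl⟩
  rw [ntCountA, List.length_eq_zero_iff] at h
  simp [h] at this

end Paper
namespace Paper

variable {N T : Type}

theorem DFSeq_toKSeq {G : CFG N T} {k : ℕ∞} {m : ℕ} {ua : AWord N T} {l} {va : AWord N T}
    (h : DFSeq G k m ua l va) : KSeq G k (strip ua) l (strip va) := by
  induction h with
  | refl m u hu => exact KSeq.refl _ (by rwa [← ntCountA_eq])
  | @step m u v p j o rest hc hp hget hdf htail ih =>
      exact KSeq.step (by rwa [← ntCountA_eq]) hp (strip_get?_of hget)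
        (by rwa [strip_applyProdA] at ih)

theorem DFSeq_glue {G : CFG N T} {k : ℕ∞} {m : ℕ} {ua : AWord N T} {l1} {wa : AWord N T}
    (h1 : DFSeq G k m ua l1 wa) :
    ∀ {l2 va}, DFSeq G k (m + l1.length) wa l2 va → DFSeq G k m ua (l1 ++ l2) va := by
  induction h1 with
  | refl m u hu => intro l2 va h2; simpa using h2
  | @step m u v p j o rest hc hp hget hdf htail ih =>
      intro l2 va h2
      refine DFSeq.step hc hp hget hdf (ih ?_)
      have : m + ((p, j) :: rest).length = m + 1 + rest.length := by
        simp [Nat.add_comm, Nat.add_assoc, Nat.add_left_comm]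
      rwa [this] at h2

theorem get?_append_mid {α : Type*} (l1 l2 l3 : List α) {j : ℕ} (hj : j < l2.length) :
    (l1 ++ l2 ++ l3)[l1.length + j]? = l2[j]? := by
  rw [List.append_assoc, List.getElem?_append_right (Nat.le_add_right _ _)]
  rw [Nat.add_sub_cancel_left]
  exact List.getElem?_append_left hj

theorem get?_append3_cases {α : Type*} {l1 l2 l3 : List α} {i : ℕ} {a : α}
    (h : (l1 ++ l2 ++ l3)[i]? = some a) :
    a ∈ l1 ∨ (∃ j, i = l1.length + j ∧ l2[j]? = some a) ∨ a ∈ l3 := by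
  rw [List.append_assoc] at h
  by_cases h1 : i < l1.length
  · rw [List.getElem?_append_left h1] at h
    exact Or.inl (List.mem_of_getElem? h)
  · push_neg at h1
    rw [List.getElem?_append_right h1] at h
    by_cases h2 : i - l1.length < l2.length
    · rw [List.getElem?_append_left h2] at h
      exact Or.inr (Or.inl ⟨i - l1.length, by omega, h⟩)
    · push_neg at h2
      rw [List.getElem?_append_right h2] at h
      exact Or.inr (Or.inr (List.mem_of_getElem? h))

theorem applyProdA_append_mid (p : CProd N T) (j m : ℕ) (uaL u uaR : AWord N T)
    (hj : j < u.length) :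
    applyProdA p (uaL.length + j) m (uaL ++ u ++ uaR) = uaL ++ applyProdA p j m u ++ uaR := by
  have h1 : List.take (uaL.length + j) (uaL ++ u ++ uaR) = uaL ++ List.take j u := by
    rw [List.append_assoc, List.take_length_add_append, List.take_append_of_le_length (le_of_lt hj)]
  have h2 : List.drop (uaL.length + j + 1) (uaL ++ u ++ uaR) = List.drop (j + 1) u ++ uaR := by
    rw [List.append_assoc, show uaL.length + j + 1 = uaL.length + (j + 1) by omega,
      List.drop_length_add_append, List.drop_append_of_le_length (by omega)]
  unfold applyProdA
  rw [h1, h2]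
  simp [List.append_assoc]

theorem mem_applyProdA {p : CProd N T} {j m : ℕ} {u : AWord N T} {x : N} {o : ℕ}
    (h : (Sum.inl x, o) ∈ applyProdA p j m u) : (Sum.inl x, o) ∈ u ∨ o = m := by
  unfold applyProdA at h
  rcases List.mem_append.1 h with h' | h'
  · rcases List.mem_append.1 h' with h'' | h''
    · exact Or.inl (List.mem_of_mem_take h'')
    · right
      obtain ⟨s, _, hs⟩ := List.mem_map.1 h''
      exact (Prod.mk.injEq _ _ _ _ ▸ hs).2.symm ▸ rfl
  · exact Or.inl (List.mem_of_mem_drop h')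

theorem ntCountA_append (u v : AWord N T) : ntCountA (u ++ v) = ntCountA u + ntCountA v := by
  simp [ntCountA, List.filter_append]

theorem DFSeq_embed {G : CFG N T} {k' : ℕ∞} {m : ℕ} {w : AWord N T} {l} {va : AWord N T}
    (h : DFSeq G k' m w l va) :
    ∀ (uaL uaR : AWord N T) (k : ℕ∞),
    (∀ a : ℕ, (a : ℕ∞) ≤ k' → ((a + (ntCountA uaL + ntCountA uaR) : ℕ) : ℕ∞) ≤ k) →
    (∀ x o, (Sum.inl x, o) ∈ uaL ++ uaR →
      o ≤ m ∧ ∀ x' o', (Sum.inl x', o') ∈ w → o ≤ o') →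
    DFSeq G k m (uaL ++ w ++ uaR) (l.map fun q => (q.1, uaL.length + q.2))
      (uaL ++ va ++ uaR) := by
  induction h with
  | refl m u hu =>
      intro uaL uaR k hk hctx
      refine DFSeq.refl _ _ ?_
      have he : ntCountA (uaL ++ u ++ uaR) = ntCountA u + (ntCountA uaL + ntCountA uaR) := by
        rw [ntCountA_append, ntCountA_append]; omega
      rw [he]; exact hk _ hu
  | @step m u v p j o rest hc hp hget hdf htail ih =>
      intro uaL uaR k hk hctx
      have hjlt : j < u.length := by
        have := List.getElem?_eq_some_iff.1 hget; exact this.1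
      have hget' : (uaL ++ u ++ uaR)[uaL.length + j]? = some (Sum.inl p.1, o) := by
        rw [get?_append_mid _ _ _ hjlt]; exact hget
      have hbd : (ntCountA (uaL ++ u ++ uaR) : ℕ∞) ≤ k := by
        have he : ntCountA (uaL ++ u ++ uaR) = ntCountA u + (ntCountA uaL + ntCountA uaR) := by
          rw [ntCountA_append, ntCountA_append]; omega
        rw [he]; exact hk _ hc
      have hdf' : dfOK (uaL ++ u ++ uaR) (uaL.length + j) := by
        intro i x o' hi s oj hj
        rw [hget'] at hj
        injection hj with hj1
        cases hj1
        rcases get?_append3_cases hi with hm | ⟨j', hj', hg⟩ | hm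
        · exact (hctx x o' (List.mem_append.2 (Or.inl hm))).2 p.1 o (List.mem_of_getElem? hget)
        · exact hdf j' x o' hg (Sum.inl p.1) o hget
        · exact (hctx x o' (List.mem_append.2 (Or.inr hm))).2 p.1 o (List.mem_of_getElem? hget)
      have happ : applyProdA p (uaL.length + j) (m + 1) (uaL ++ u ++ uaR)
          = uaL ++ applyProdA p j (m + 1) u ++ uaR := applyProdA_append_mid p j (m+1) _ _ _ hjlt
      have ih' := ih uaL uaR k hk (by
        intro x o' hmem
        obtain ⟨ho1, ho2⟩ := hctx x o' hmem
        refine ⟨by omega, ?_⟩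
        intro x' o'' hm'
        rcases mem_applyProdA hm' with hin | hval
        · exact ho2 x' o'' hin
        · omega)
      rw [← happ] at ih'
      exact DFSeq.step hbd hp hget' hdf' ih'

end Paper
namespace Paper

variable {N T : Type}

/-! ### getD / set helpers -/

theorem getD_map_nil {β : Type*} :
    ∀ (ws : List (Word N T)) (j : ℕ), (ws.map fun _ => ([] : List β)).getD j [] = []
  | [], j => by simp
  | w :: ws, 0 => rfl
  | w :: ws, j + 1 => getD_map_nil ws j

theorem getD_set_self {α : Type*} :
    ∀ (l : List α) (i : ℕ) (a d : α), i < l.length → (l.set i a).getD i d = a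
  | x :: l, 0, a, d, _ => rfl
  | x :: l, i + 1, a, d, h => getD_set_self l i a d (by simpa using h)
  | [], i, a, d, h => by simp at h

theorem getD_set_ne {α : Type*} :
    ∀ (l : List α) {i j : ℕ} (a d : α), i ≠ j → (l.set i a).getD j d = l.getD j d
  | [], i, j, a, d, h => by simp
  | x :: l, 0, 0, a, d, h => absurd rfl h
  | x :: l, 0, j + 1, a, d, h => rfl
  | x :: l, i + 1, 0, a, d, h => rfl
  | x :: l, i + 1, j + 1, a, d, h => getD_set_ne l a d (fun e => h (by omega))

theorem lt_of_getD_ne_nil {α : Type*} {l : List (List α)} {i : ℕ}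
    (h : l.getD i [] ≠ []) : i < l.length := by
  by_contra h'
  exact h (List.getD_eq_default _ _ (by omega))

theorem set_of_getD_nil {α : Type*} :
    ∀ (l : List (List α)) (i : ℕ), l.getD i [] = [] → l.set i [] = l
  | [], i, _ => by simp
  | x :: l, 0, h => by simp at h; simp [h]
  | x :: l, i + 1, h => by
      have := set_of_getD_nil l i (by simpa using h)
      simp [this]

theorem countP_set_eq {α : Type*} (p : α → Bool) :
    ∀ (l : List α) (i : ℕ) (a d : α), i < l.length → p a = p (l.getD i d) →
      (l.set i a).countP p = l.countP p
  | x :: l, 0, a, d, _, h => by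
      simp only [List.set, List.getD, List.countP_cons] at h ⊢
      simp at h
      rw [h]
  | x :: l, i + 1, a, d, h, hp => by
      simp only [List.set, List.countP_cons]
      rw [countP_set_eq p l i a d (by simpa using h) (by simpa using hp)]
  | [], i, a, d, h, _ => by simp at h

/-! ### join lemmas -/

/-- offset of the `i`-th block inside the concatenation -/
def offs (ws : List (Word N T)) (i : ℕ) : ℕ := ((ws.take i).map List.length).sum

theorem offs_cons_succ (w : Word N T) (ws : List (Word N T)) (i : ℕ) :
    offs (w :: ws) (i + 1) = w.length + offs ws i := by
  simp [offs]

theorem join_get? : ∀ (ws : List (Word N T)) (i j : ℕ) {s},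
    (ws.getD i [])[j]? = some s → ws.flatten[offs ws i + j]? = some s
  | [], i, j, s, h => by simp at h
  | w :: ws, 0, j, s, h => by
      have hj : j < w.length := (List.getElem?_eq_some_iff.1 h).1
      show (w ++ ws.flatten)[offs (w :: ws) 0 + j]? = some s
      have : offs (w :: ws) 0 = 0 := rfl
      rw [this, Nat.zero_add, List.getElem?_append_left hj]
      exact h
  | w :: ws, i + 1, j, s, h => by
      have ih := join_get? ws i j h
      show (w ++ ws.flatten)[offs (w :: ws) (i + 1) + j]? = some s
      rw [offs_cons_succ, Nat.add_assoc, List.getElem?_append_right (Nat.le_add_right _ _),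
        Nat.add_sub_cancel_left]
      exact ih

theorem join_apply : ∀ (ws : List (Word N T)) (i : ℕ) (p : CProd N T) (j : ℕ),
    j < (ws.getD i []).length →
    applyProd p (offs ws i + j) ws.flatten = (ws.set i (applyProd p j (ws.getD i []))).flatten
  | [], i, p, j, h => by simp at h
  | w :: ws, 0, p, j, h => by
      have h' : j < w.length := by simpa using h
      show applyProd p (offs (w :: ws) 0 + j) (w ++ ws.flatten) = applyProd p j w ++ ws.flatten
      have h0 : offs (w :: ws) 0 = 0 := rfl
      have h1 : List.take j (w ++ ws.flatten) = List.take j w :=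
        List.take_append_of_le_length (le_of_lt h')
      have h2 : List.drop (j + 1) (w ++ ws.flatten) = List.drop (j + 1) w ++ ws.flatten :=
        List.drop_append_of_le_length (by simpa using h)
      unfold applyProd
      rw [h0, Nat.zero_add, h1, h2]
      simp [List.append_assoc]
  | w :: ws, i + 1, p, j, h => by
      have ih := join_apply ws i p j h
      show applyProd p (offs (w :: ws) (i + 1) + j) (w ++ ws.flatten)
        = w ++ (ws.set i (applyProd p j (ws.getD i []))).flatten
      rw [offs_cons_succ, Nat.add_assoc]
      have h1 : List.take (w.length + (offs ws i + j)) (w ++ ws.flatten)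
          = w ++ List.take (offs ws i + j) ws.flatten := List.take_length_add_append _
      have h2 : List.drop (w.length + (offs ws i + j) + 1) (w ++ ws.flatten)
          = List.drop (offs ws i + j + 1) ws.flatten := by
        rw [show w.length + (offs ws i + j) + 1 = w.length + (offs ws i + j + 1) by omega]
        exact List.drop_length_add_append _
      unfold applyProd at ih ⊢
      rw [h1, h2, List.append_assoc, List.append_assoc,
        ← List.append_assoc (List.take (offs ws i + j) ws.flatten), ih]

theorem join_get?_surj : ∀ (ws : List (Word N T)) (j : ℕ) {s},
    ws.flatten[j]? = some s →
    ∃ i j', (ws.getD i [])[j']? = some s ∧ j = offs ws i + j' ∧ j' < (ws.getD i []).length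
  | [], j, s, h => by simp at h
  | w :: ws, j, s, h => by
      by_cases hj : j < w.length
      · refine ⟨0, j, ?_, by simp [offs], hj⟩
        show w[j]? = some s
        rw [← List.getElem?_append_left hj]
        exact h
      · push_neg at hj
        have h' : ws.flatten[j - w.length]? = some s := by
          rw [← List.getElem?_append_right hj]
          exact h
        obtain ⟨i, j', h1, h2, h3⟩ := join_get?_surj ws (j - w.length) h'
        exact ⟨i + 1, j', h1, by rw [offs_cons_succ]; omega, h3⟩

/-! ### interleaved multi-part step sequences -/

/-- `IlN G k n ws lss vs`: an interleaved family of step sequences, one per part: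
starting from the tuple of words `ws`, applying in some interleaved order the
local steps recorded in `lss` (per part, in order), ending in the tuple `vs`;
at every moment the total number of nonterminals is at most `k`; `n` is the
total number of steps. -/
inductive IlN (G : CFG N T) (k : ℕ∞) :
    ℕ → List (Word N T) → List (List (CProd N T × ℕ)) → List (Word N T) → Prop
  | nil (ws) : ((ws.map ntCount).sum : ℕ∞) ≤ k → IlN G k 0 ws (ws.map fun _ => []) ws
  | step {n ws lss vs} (i : ℕ) (p : CProd N T) (j : ℕ) :
      ((ws.map ntCount).sum : ℕ∞) ≤ k → p ∈ G.prods →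
      (ws.getD i [])[j]? = some (Sum.inl p.1) →
      IlN G k n (ws.set i (applyProd p j (ws.getD i []))) lss vs →
      IlN G k (n + 1) ws (lss.set i ((p, j) :: lss.getD i [])) vs

theorem IlN.lens {G : CFG N T} {k : ℕ∞} {n ws lss vs} (h : IlN G k n ws lss vs) :
    lss.length = ws.length ∧ vs.length = ws.length := by
  induction h with
  | nil ws _ => simp
  | step i p j _ _ _ _ ih => simp_all

theorem IlN.ge_one {G : CFG N T} {k : ℕ∞} {n ws lss vs} (h : IlN G k n ws lss vs) :
    ∀ j, lss.getD j [] ≠ [] → 1 ≤ ntCount (ws.getD j []) := by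
  induction h with
  | nil ws _ => intro j hj; exact absurd (getD_map_nil ws j) hj
  | @step n ws lss vs i p j hb hp hv hin ih =>
      intro j0 hj0
      by_cases hji : j0 = i
      · subst hji; exact one_le_ntCount hv
      · have h1 := ih j0 (by rwa [getD_set_ne lss _ _ (fun e => hji e.symm)] at hj0)
        rwa [getD_set_ne ws _ _ (fun e => hji e.symm)] at h1

theorem IlN.frozen {G : CFG N T} {k : ℕ∞} {n ws lss vs} (h : IlN G k n ws lss vs) :
    ∀ j, lss.getD j [] = [] → ws.getD j [] = vs.getD j [] := by
  induction h with
  | nil ws _ => intro j _; rfl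
  | @step n ws lss vs i p j hb hp hv hin ih =>
      intro j0 h0
      have hiw : i < ws.length := by
        apply lt_of_getD_ne_nil
        intro e
        rw [e] at hv; simp at hv
      have hilss : i < lss.length := by
        rw [hin.lens.1]; simpa using hiw
      by_cases hji : j0 = i
      · subst hji
        rw [getD_set_self lss _ _ _ hilss] at h0
        exact absurd h0 (by simp)
      · have h1 := ih j0 (by rwa [getD_set_ne lss _ _ (fun e => hji e.symm)] at h0)
        rwa [getD_set_ne ws _ _ (fun e => hji e.symm)] at h1

theorem IlN.zero_inv {G : CFG N T} {k : ℕ∞} {ws lss vs} (h : IlN G k 0 ws lss vs) :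
    ∀ j, lss.getD j [] = [] := by
  cases h with
  | nil _ => intro j; exact getD_map_nil ws j

theorem KSeq_toIlN {G : CFG N T} {k : ℕ∞} {u : Word N T} {l} {v : Word N T}
    (h : KSeq G k u l v) : ∀ ws : List (Word N T), ws.flatten = u →
    ∃ lss vs, IlN G k l.length ws lss vs ∧ vs.flatten = v := by
  induction h with
  | refl u hu =>
      intro ws hw
      exact ⟨ws.map fun _ => [], ws,
        by subst hw; exact IlN.nil ws (by rwa [← ntCount_join]), hw⟩
  | @step u v p j rest hb hp hv htail ih =>
      intro ws hw
      subst hw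
      obtain ⟨i, j', h1, h2, h3⟩ := join_get?_surj ws j hv
      obtain ⟨lss, vs, hI, hjv⟩ := ih (ws.set i (applyProd p j' (ws.getD i [])))
        (by rw [← join_apply ws i p j' h3, ← h2])
      exact ⟨lss.set i ((p, j') :: lss.getD i []), vs,
        IlN.step i p j' (by rwa [← ntCount_join]) hp h1 hI, hjv⟩

theorem IlN.toKSeq {G : CFG N T} {k : ℕ∞} {n ws lss vs} (h : IlN G k n ws lss vs) :
    ∃ l : List (CProd N T × ℕ), l.length = n ∧ KSeq G k ws.flatten l vs.flatten := by
  induction h with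
  | nil ws hb => exact ⟨[], rfl, KSeq.refl _ (by rw [ntCount_join]; exact hb)⟩
  | @step n ws lss vs i p j hb hp hv hin ih =>
      obtain ⟨l, hl, hK⟩ := ih
      have hj : j < (ws.getD i []).length := (List.getElem?_eq_some_iff.1 hv).1
      exact ⟨(p, offs ws i + j) :: l, by simp [hl],
        KSeq.step (by rw [ntCount_join]; exact hb) hp (join_get? ws i j hv)
          (by rwa [join_apply ws i p j hj])⟩

end Paper
namespace Paper

variable {N T : Type}

/-! ### counting lemmas -/

theorem getD_nt_le_sum : ∀ (ws : List (Word N T)) (i : ℕ),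
    ntCount (ws.getD i []) ≤ (ws.map ntCount).sum
  | [], i => by simp [ntCount]
  | w :: ws, 0 => by simp
  | w :: ws, i + 1 => by
      have := getD_nt_le_sum ws i
      simp only [List.getD_cons_succ, List.map_cons, List.sum_cons]
      omega

theorem cnt_le_sum : ∀ (ws : List (Word N T)) (lss : List (List (CProd N T × ℕ))),
    lss.length ≤ ws.length →
    (∀ j, lss.getD j [] ≠ [] → 1 ≤ ntCount (ws.getD j [])) →
    lss.countP (fun s => !s.isEmpty) ≤ (ws.map ntCount).sum
  | _, [], _, _ => by simp
  | [], s :: lss, hl, _ => by simp at hl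
  | w :: ws, s :: lss, hl, h => by
      have ih := cnt_le_sum ws lss (by simpa using hl) (fun j hj => by
        have := h (j + 1) (by simpa using hj)
        simpa using this)
      rw [List.countP_cons]
      simp only [List.map_cons, List.sum_cons]
      by_cases hs : s = []
      · subst hs
        simp only [List.isEmpty_nil, Bool.not_true, Bool.false_eq_true, if_false]
        omega
      · have h0 := h 0 (by simpa using hs)
        have hb : (!s.isEmpty) = true := by simp [hs]
        simp only [List.getD_cons_zero] at h0
        rw [hb, if_pos rfl]
        omega

theorem sum_ge : ∀ (ws : List (Word N T)) (lss : List (List (CProd N T × ℕ))) (i : ℕ),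
    lss.length ≤ ws.length →
    (∀ j, j ≠ i → lss.getD j [] ≠ [] → 1 ≤ ntCount (ws.getD j [])) →
    ntCount (ws.getD i []) + (lss.set i []).countP (fun s => !s.isEmpty)
      ≤ (ws.map ntCount).sum
  | ws, [], i, _, _ => by
      simpa using getD_nt_le_sum ws i
  | [], s :: lss, i, hl, _ => by simp at hl
  | w :: ws, s :: lss, 0, hl, h => by
      have hc := cnt_le_sum ws lss (by simpa using hl) (fun j hj => by
        have := h (j + 1) (by omega) (by simpa using hj)
        simpa using this)
      simp only [List.set, List.getD_cons_zero, List.map_cons, List.sum_cons, List.countP_cons]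
      simp only [List.isEmpty_nil, Bool.not_true, Bool.false_eq_true, if_false]
      omega
  | w :: ws, s :: lss, i + 1, hl, h => by
      have ih := sum_ge ws lss i (by simpa using hl) (fun j hj hne => by
        have := h (j + 1) (by omega) (by simpa using hne)
        simpa using this)
      simp only [List.set, List.getD_cons_succ, List.map_cons, List.sum_cons, List.countP_cons]
      by_cases hs : s = []
      · subst hs
        simp only [List.isEmpty_nil, Bool.not_true, Bool.false_eq_true, if_false]
        omega
      · have h0 := h 0 (by omega) (by simpa using hs)
        have hb : (!s.isEmpty) = true := by simp [hs]
        simp only [List.getD_cons_zero] at h0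
        rw [hb, if_pos rfl]
        omega

theorem sum_le_cnt : ∀ (ws : List (Word N T)) (lss : List (List (CProd N T × ℕ))),
    ws.length ≤ lss.length →
    (∀ j, lss.getD j [] = [] → ntCount (ws.getD j []) = 0) →
    (∀ j, ntCount (ws.getD j []) ≤ 1) →
    (ws.map ntCount).sum ≤ lss.countP (fun s => !s.isEmpty)
  | [], _, _, _, _ => by simp
  | w :: ws, [], hl, _, _ => by simp at hl
  | w :: ws, s :: lss, hl, h0, h1 => by
      have ih := sum_le_cnt ws lss (by simpa using hl)
        (fun j hj => by have := h0 (j + 1) (by simpa using hj); simpa using this)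
        (fun j => by have := h1 (j + 1); simpa using this)
      rw [List.countP_cons]
      simp only [List.map_cons, List.sum_cons]
      by_cases hs : s = []
      · have hw := h0 0 (by simp [hs])
        simp only [List.getD_cons_zero] at hw
        subst hs
        simp only [List.isEmpty_nil, Bool.not_true, Bool.false_eq_true, if_false]
        omega
      · have hw := h1 0
        simp only [List.getD_cons_zero] at hw
        have hb : (!s.isEmpty) = true := by simp [hs]
        rw [hb, if_pos rfl]
        omega

theorem sum_le : ∀ (ws : List (Word N T)) (lss : List (List (CProd N T × ℕ))) (i : ℕ),
    ws.length ≤ lss.length →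
    (∀ j, lss.getD j [] = [] → ntCount (ws.getD j []) = 0) →
    (∀ j, ntCount (ws.getD j []) ≤ 1) →
    (ws.map ntCount).sum
      ≤ ntCount (ws.getD i []) + (lss.set i []).countP (fun s => !s.isEmpty)
  | [], _, i, _, _, _ => by simp
  | w :: ws, [], i, hl, _, _ => by simp at hl
  | w :: ws, s :: lss, 0, hl, h0, h1 => by
      have hc := sum_le_cnt ws lss (by simpa using hl)
        (fun j hj => by have := h0 (j + 1) (by simpa using hj); simpa using this)
        (fun j => by have := h1 (j + 1); simpa using this)
      simp only [List.set, List.getD_cons_zero, List.map_cons, List.sum_cons, List.countP_cons]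
      simp only [List.isEmpty_nil, Bool.not_true, Bool.false_eq_true, if_false]
      omega
  | w :: ws, s :: lss, i + 1, hl, h0, h1 => by
      have ih := sum_le ws lss i (by simpa using hl)
        (fun j hj => by have := h0 (j + 1) (by simpa using hj); simpa using this)
        (fun j => by have := h1 (j + 1); simpa using this)
      simp only [List.set, List.getD_cons_succ, List.map_cons, List.sum_cons, List.countP_cons]
      by_cases hs : s = []
      · have hw := h0 0 (by simp [hs])
        simp only [List.getD_cons_zero] at hw
        subst hs
        simp only [List.isEmpty_nil, Bool.not_true, Bool.false_eq_true, if_false]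
        omega
      · have hw := h1 0
        simp only [List.getD_cons_zero] at hw
        have hb : (!s.isEmpty) = true := by simp [hs]
        rw [hb, if_pos rfl]
        omega

theorem sum_set_le {ws : List (Word N T)} {i : ℕ} {v : Word N T} (hv : ntCount v = 0) :
    ((ws.set i v).map ntCount).sum ≤ (ws.map ntCount).sum := by
  induction ws generalizing i with
  | nil => simp
  | cons w ws ih =>
      cases i with
      | zero => simp [hv]
      | succ i =>
          simp only [List.set, List.map_cons, List.sum_cons]
          have := ih (i := i)
          omega

/-! ### arithmetic in `ℕ∞` -/

theorem enat_le_sub_iff {a c : ℕ∞} {b : ℕ} (hb : (b : ℕ∞) ≤ c) : a ≤ c - b ↔ a + b ≤ c := by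
  induction c using ENat.recTopCoe with
  | top => simp
  | coe n =>
      induction a using ENat.recTopCoe with
      | top =>
          constructor
          · intro h
            exact absurd h (by
              rw [← ENat.coe_sub]
              exact fun hh => by simpa using (top_le_iff.1 hh))
          · intro h
            exact absurd h (by
              rw [top_add]
              exact fun hh => by simpa using (top_le_iff.1 hh))
      | coe m =>
          have hbn : b ≤ n := by exact_mod_cast hb
          rw [← ENat.coe_sub, ← Nat.cast_add, Nat.cast_le, Nat.cast_le]
          omega

theorem enat_le_sub_of {a c : ℕ∞} {b : ℕ} (h : a + b ≤ c) : a ≤ c - b := by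
  have hb : (b : ℕ∞) ≤ c := le_trans (by simp [le_add_self]) h
  exact (enat_le_sub_iff hb).2 h

end Paper
namespace Paper

variable {N T : Type}

/-- **finishes-first extraction**: from an interleaved family with all final part words
terminal, one can extract a part `i` whose whole local step sequence can be performed
first with index bounded by `k` minus the number of other still-active parts, leaving
an interleaved family for the remaining steps. -/
theorem IlN.ff {G : CFG N T} {k : ℕ∞} {n : ℕ} {ws : List (Word N T)}
    {lss : List (List (CProd N T × ℕ))} {vs : List (Word N T)}
    (h : IlN G k n ws lss vs)
    (hterm : ∀ j, ntCount (vs.getD j []) = 0)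
    (hne : ∃ i0, lss.getD i0 [] ≠ []) :
    ∃ i n', i < ws.length ∧ lss.getD i [] ≠ [] ∧ n = (lss.getD i []).length + n' ∧
      KSeq G (k - ((lss.set i []).countP (fun s => !s.isEmpty) : ℕ))
        (ws.getD i []) (lss.getD i []) (vs.getD i []) ∧
      IlN G k n' (ws.set i (vs.getD i [])) (lss.set i []) vs := by
  induction h with
  | nil ws hb =>
      obtain ⟨i0, h0⟩ := hne
      exact absurd (getD_map_nil ws i0) h0
  | @step n ws lss0 vs i0 p j hb hp hv hin ih =>
      clear hne
      have hwl : i0 < ws.length :=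
        lt_of_getD_ne_nil (l := ws) (by intro e; rw [e] at hv; simp at hv)
      have hl0 : lss0.length = ws.length := by simpa using hin.lens.1
      have hvl : vs.length = ws.length := by simpa using hin.lens.2
      have hil : i0 < lss0.length := by omega
      have hgetLSS : (lss0.set i0 ((p, j) :: lss0.getD i0 [])).getD i0 []
          = (p, j) :: lss0.getD i0 [] := getD_set_self _ _ _ _ hil
      by_cases hE : lss0.getD i0 [] = []
      · -- the part `i0` finishes right now: choose it
        have hfroz := hin.frozen i0 hE
        have havq : vs.getD i0 [] = applyProd p j (ws.getD i0 []) := by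
          rw [← hfroz, getD_set_self _ _ _ _ hwl]
        have hLSSset : (lss0.set i0 ((p, j) :: lss0.getD i0 [])).set i0 [] = lss0 := by
          rw [List.set_set, set_of_getD_nil lss0 i0 hE]
        have hbd : (↑(ntCount (ws.getD i0 [])) : ℕ∞)
            ≤ k - (((lss0.set i0 ((p, j) :: lss0.getD i0 [])).set i0 []).countP
                (fun s => !s.isEmpty) : ℕ) := by
          apply enat_le_sub_of
          have hsg := sum_ge ws (lss0.set i0 ((p, j) :: lss0.getD i0 [])) i0
            (by simp; omega)
            (by
              intro j0 hj0 hne0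
              rw [getD_set_ne lss0 _ _ (fun e => hj0 e.symm)] at hne0
              have := hin.ge_one j0 hne0
              rwa [getD_set_ne ws _ _ (fun e => hj0 e.symm)] at this)
          calc ((ntCount (ws.getD i0 []) : ℕ∞) + _) = ((_ : ℕ) : ℕ∞) := by push_cast; ring
          _ ≤ ((List.map ntCount ws).sum : ℕ∞) := Nat.cast_le.2 hsg
          _ ≤ k := hb
        refine ⟨i0, n, hwl, ?_, ?_, ?_, ?_⟩
        · rw [hgetLSS]; simp
        · rw [hgetLSS, hE]; simp; omega
        · rw [hgetLSS]
          refine KSeq.step hbd hp hv ?_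
          rw [hE, ← havq]
          exact KSeq.refl _ (by rw [hterm i0]; simp)
        · rw [hLSSset, havq]
          exact hin
      · -- recurse
        obtain ⟨i, n', hiw', hine, hcnt, hK, hR⟩ := ih hterm ⟨i0, hE⟩
        have hiw : i < ws.length := by simpa using hiw'
        by_cases hii : i = i0
        · subst hii
          have hbd : (↑(ntCount (ws.getD i [])) : ℕ∞)
              ≤ k - (((lss0.set i ((p, j) :: lss0.getD i [])).set i []).countP
                  (fun s => !s.isEmpty) : ℕ) := by
            apply enat_le_sub_of
            have hsg := sum_ge ws (lss0.set i ((p, j) :: lss0.getD i [])) i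
              (by simp; omega)
              (by
                intro j0 hj0 hne0
                rw [getD_set_ne lss0 _ _ (fun e => hj0 e.symm)] at hne0
                have := hin.ge_one j0 hne0
                rwa [getD_set_ne ws _ _ (fun e => hj0 e.symm)] at this)
            calc ((ntCount (ws.getD i []) : ℕ∞) + _) = ((_ : ℕ) : ℕ∞) := by push_cast; ring
            _ ≤ ((List.map ntCount ws).sum : ℕ∞) := Nat.cast_le.2 hsg
            _ ≤ k := hb
          refine ⟨i, n', hiw, ?_, ?_, ?_, ?_⟩
          · rw [hgetLSS]; simp
          · rw [hgetLSS]; simp [hcnt]; omega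
          · rw [hgetLSS, List.set_set]
            rw [List.set_set] at hbd
            refine KSeq.step hbd hp hv ?_
            have hK' := hK
            rw [getD_set_self _ _ _ _ hwl] at hK'
            exact hK'
          · rw [List.set_set]
            rw [List.set_set] at hR
            exact hR
        · -- `i ≠ i0`
          have hLne : (lss0.set i0 ((p, j) :: lss0.getD i0 [])).getD i []
              = lss0.getD i [] := getD_set_ne lss0 _ _ (fun e => hii e.symm)
          have hsetcomm : (lss0.set i0 ((p, j) :: lss0.getD i0 [])).set i []
              = (lss0.set i []).set i0 ((p, j) :: lss0.getD i0 []) :=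
            List.set_comm _ _ (fun e => hii e.symm)
          have hcntEq : ((lss0.set i0 ((p, j) :: lss0.getD i0 [])).set i []).countP
              (fun s => !s.isEmpty) = (lss0.set i []).countP (fun s => !s.isEmpty) := by
            rw [hsetcomm]
            refine countP_set_eq _ _ _ _ [] (by simpa using hil) ?_
            rw [getD_set_ne lss0 _ _ hii]
            cases h' : lss0.getD i0 [] with
            | nil => exact absurd h' hE
            | cons a t => simp
          refine ⟨i, n' + 1, hiw, ?_, ?_, ?_, ?_⟩
          · rwa [hLne]
          · rw [hLne]; omega
          · rw [hLne, hcntEq]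
            have hK' := hK
            rw [getD_set_ne ws _ _ (fun e => hii e.symm)] at hK'
            exact hK'
          · -- rebuild the remainder with the current step in front
            have hstep := IlN.step (G := G) (k := k) (ws := ws.set i (vs.getD i []))
              (lss := lss0.set i []) (vs := vs) i0 p j
              (by
                have h1 : (((ws.set i (vs.getD i [])).map ntCount).sum : ℕ)
                    ≤ ((ws.map ntCount).sum : ℕ) := sum_set_le (hterm i)
                exact le_trans (Nat.cast_le.2 h1) hb)
              hp
              (by rwa [getD_set_ne ws _ _ hii])
              (by
                rw [getD_set_ne ws _ _ hii]
                have : (ws.set i (vs.getD i [])).set i0 (applyProd p j (ws.getD i0 []))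
                    = (ws.set i0 (applyProd p j (ws.getD i0 []))).set i (vs.getD i []) :=
                  List.set_comm _ _ hii
                rw [this]
                exact hR)
            have hfin : (lss0.set i []).set i0 ((p, j) :: (lss0.set i []).getD i0 [])
                = (lss0.set i0 ((p, j) :: lss0.getD i0 [])).set i [] := by
              rw [hsetcomm, getD_set_ne lss0 _ _ hii]
            rwa [hfin] at hstep

end Paper
namespace Paper

variable {N T : Type}

theorem join_map_singleton : ∀ u : Word N T, (u.map fun s => [s]).flatten = u
  | [] => rfl
  | s :: u => by simp [join_map_singleton u]

theorem getD_of_get? {α : Type*} {l : List α} {i : ℕ} {a : α} (h : l[i]? = some a) (d : α) :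
    l.getD i d = a := by
  rw [List.getD_eq_getElem?_getD, h]
  rfl

theorem getD_mem_or {α : Type*} : ∀ (l : List α) (i : ℕ) (d : α), l.getD i d ∈ l ∨ l.getD i d = d
  | [], i, d => Or.inr (by simp)
  | a :: l, 0, d => Or.inl (by rw [List.getD_cons_zero]; exact List.mem_cons_self)
  | a :: l, i + 1, d => by
      rw [List.getD_cons_succ]
      rcases getD_mem_or l i d with h | h
      · exact Or.inl (List.mem_cons_of_mem _ h)
      · exact Or.inr h

theorem ntCount_singleton_le (s : N ⊕ T) : ntCount [s] ≤ 1 :=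
  le_trans (List.length_filter_le _ _) (by simp)

theorem join_set_singleton : ∀ (u : Word N T) (i : ℕ) (w : Word N T), i < u.length →
    ((u.map fun s => [s]).set i w).flatten = u.take i ++ w ++ u.drop (i + 1)
  | [], i, w, h => by simp at h
  | s :: u, 0, w, _ => by simp [join_map_singleton u]
  | s :: u, i + 1, w, h => by
      have := join_set_singleton u i w (by simpa using h)
      simpa using this

theorem mem_applyProdA' {p : CProd N T} {j m : ℕ} {u : AWord N T} {x : N} {o : ℕ}
    (h : (Sum.inl x, o) ∈ applyProdA p j m u) :
    (Sum.inl x, o) ∈ u.take j ++ u.drop (j + 1) ∨ o = m := by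
  unfold applyProdA at h
  rcases List.mem_append.1 h with h' | h'
  · rcases List.mem_append.1 h' with h'' | h''
    · exact Or.inl (List.mem_append.2 (Or.inl h''))
    · right
      obtain ⟨s, _, hs⟩ := List.mem_map.1 h''
      exact (Prod.mk.injEq _ _ _ _ ▸ hs).2.symm ▸ rfl
  · exact Or.inl (List.mem_append.2 (Or.inr h'))

/-- **Main construction**: a `k`-index step sequence ending in a terminal word can be
reordered into a `k`-index depth-first step sequence from any annotation of its initial
word in which all nonterminals carry the same annotation `c ≤ m`. -/
theorem main_df {G : CFG N T} : ∀ (n : ℕ) (k : ℕ∞) (u : Word N T) (l : List (CProd N T × ℕ))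
    (v : Word N T), KSeq G k u l v → l.length ≤ n → ntCount v = 0 →
    ∀ (m c : ℕ) (ua : AWord N T), strip ua = u →
      (∀ x o, (Sum.inl x, o) ∈ ua → o = c) → c ≤ m →
      ∃ l' va, DFSeq G k m ua l' va ∧ strip va = v := by
  intro n
  induction n with
  | zero =>
      intro k u l v hK hlen hv m c ua hs hann hcm
      have hl0 : l = [] := List.length_eq_zero_iff.1 (Nat.le_zero.1 hlen)
      subst hl0
      cases hK with
      | refl _ hb => exact ⟨[], ua, DFSeq.refl m ua (by rw [ntCountA_eq, hs]; exact hb), hs⟩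
  | succ n ih =>
      intro k u l v hK hlen hv m c ua hs hann hcm
      cases hK with
      | refl _ hb => exact ⟨[], ua, DFSeq.refl m ua (by rw [ntCountA_eq, hs]; exact hb), hs⟩
      | @step _ _ p j rest hb hp hval htail =>
        by_cases hr : ntCount u < 2
        · -- exactly one nonterminal: keep the first step, recurse
          have hr1 : ntCount u = 1 := by have := one_le_ntCount hval; omega
          obtain ⟨o, huo⟩ := exists_get?_of_strip (ua := ua) (by rw [hs]; exact hval)
          have hoc : o = c := hann _ _ (List.mem_of_getElem? huo)
          rw [hoc] at huo
          have hstrip1 : strip (applyProdA p j (m + 1) ua) = applyProd p j u := by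
            rw [strip_applyProdA, hs]
          have hctx0 : ntCount ((strip ua).take j ++ (strip ua).drop (j + 1)) = 0 := by
            have hdec := eq_take_cons_drop (strip ua) j (by rw [hs]; exact hval)
            have : ntCount (strip ua) = 1 := by rw [hs]; exact hr1
            rw [hdec] at this
            rw [ntCount_append] at this ⊢
            rw [ntCount_cons] at this
            simp at this
            omega
          have hann1 : ∀ x o', (Sum.inl x, o') ∈ applyProdA p j (m + 1) ua → o' = m + 1 := by
            intro x o' hm'
            rcases mem_applyProdA' hm' with hin | rfl
            · exfalso
              refine ntCount_zero_not_mem (w := ua.take j ++ ua.drop (j + 1)) ?_ hin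
              rw [strip_append, strip_take, strip_drop]
              exact hctx0
            · rfl
          obtain ⟨l', va, hdf, hsva⟩ := ih k (applyProd p j u) rest v htail
            (by simpa using hlen) hv (m + 1) (m + 1) (applyProdA p j (m + 1) ua)
            hstrip1 hann1 le_rfl
          refine ⟨(p, j) :: l', va, ?_, hsva⟩
          refine DFSeq.step (o := c) (by rw [ntCountA_eq, hs]; exact hb) hp huo ?_ hdf
          intro i x o' hi s oj hjj
          rw [huo] at hjj
          injection hjj with e
          cases e
          exact le_of_eq (hann _ _ (List.mem_of_getElem? hi))
        · -- at least two nonterminals: finishes-first extraction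
          push_neg at hr
          have hKfull : KSeq G k u ((p, j) :: rest) v := KSeq.step hb hp hval htail
          obtain ⟨lss, vs, hIl, hvj⟩ :=
            KSeq_toIlN hKfull (u.map fun s => [s]) (join_map_singleton u)
          have hlens := hIl.lens
          have hlsl : lss.length = u.length := by simpa using hlens.1
          have hvsl : vs.length = u.length := by simpa using hlens.2
          have hterm : ∀ j0, ntCount (vs.getD j0 []) = 0 := by
            intro j0
            rcases getD_mem_or vs j0 [] with hm | he
            · have hsum : (vs.map ntCount).sum = 0 := by rw [← ntCount_join, hvj]; exact hv
              exact List.sum_eq_zero_iff.1 hsum _ (List.mem_map.2 ⟨_, hm, rfl⟩)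
            · rw [he]; rfl
          have key : ∀ jx (x : N), u[jx]? = some (Sum.inl x) →
              lss.getD jx [] ≠ [] := by
            intro jx x hgx e
            have hwx : (u.map fun s => [s]).getD jx [] = [Sum.inl x] :=
              getD_of_get? (by rw [List.getElem?_map, hgx]; rfl) []
            have hfr := hIl.frozen jx e
            rw [hwx] at hfr
            have h0 := hterm jx
            rw [← hfr] at h0
            simp [ntCount] at h0
          obtain ⟨i, n', hiw, hine, hcnt, hK_i, hR⟩ := hIl.ff hterm ⟨j, key j p.1 hval⟩
          have hiu : i < u.length := by simpa using hiw
          obtain ⟨sy, hsy⟩ : ∃ sy, u[i]? = some sy := ⟨_, List.getElem?_eq_getElem hiu⟩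
          have hws_i : (u.map fun s => [s]).getD i [] = [sy] :=
            getD_of_get? (by rw [List.getElem?_map, hsy]; rfl) []
          obtain ⟨Y, rfl⟩ : ∃ Y, sy = Sum.inl Y := by
            have h1 := hIl.ge_one i hine
            rw [hws_i] at h1
            cases sy with
            | inl Y => exact ⟨Y, rfl⟩
            | inr t => exfalso; simp [ntCount] at h1
          -- the annotated occurrence at position i
          obtain ⟨oi, huac⟩ := exists_get?_of_strip (ua := ua) (by rw [hs]; exact hsy)
          have hoic : oi = c := hann _ _ (List.mem_of_getElem? huac)
          rw [hoic] at huac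
          have hua_eq : ua = ua.take i ++ [(Sum.inl Y, c)] ++ ua.drop (i + 1) := by
            conv_lhs => rw [eq_take_cons_drop ua i huac]
            simp
          -- a second active nonterminal gives n' ≥ 1
          obtain ⟨j1, j2, hj12, ⟨x1, hx1⟩, ⟨x2, hx2⟩⟩ := exists_two_inl hr
          obtain ⟨jo, xo, hjoi, hxo⟩ : ∃ jo xo, jo ≠ i ∧ u[jo]? = some (Sum.inl xo) := by
            by_cases h1 : j1 = i
            · exact ⟨j2, x2, by omega, hx2⟩
            · exact ⟨j1, x1, h1, hx1⟩
          have hn'pos : 1 ≤ n' := by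
            by_contra h0
            push_neg at h0
            have hz : n' = 0 := by omega
            subst hz
            have hzi := hR.zero_inv jo
            rw [getD_set_ne lss _ _ (fun e => hjoi e.symm)] at hzi
            exact key jo xo hxo hzi
          simp only [List.length_cons] at hcnt
          have hpart_pos : 1 ≤ (lss.getD i []).length := List.length_pos_iff.2 hine
          have hlen' : rest.length + 1 ≤ n + 1 := by simpa using hlen
          -- counting facts
          have hsum_r : ((u.map fun s => [s]).map ntCount).sum = ntCount u := by
            rw [← ntCount_join, join_map_singleton]
          have hsge := sum_ge (u.map fun s => [s]) lss i (by omega)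
            (fun j0 _ hne0 => hIl.ge_one j0 hne0)
          have hsle := sum_le (u.map fun s => [s]) lss i (by omega)
            (fun j0 hj0 => by rw [hIl.frozen j0 hj0]; exact hterm j0)
            (fun j0 => by
              rcases getD_mem_or (u.map fun s => [s]) j0 [] with hm | he
              · obtain ⟨s, _, he⟩ := List.mem_map.1 hm
                rw [← he]
                exact ntCount_singleton_le s
              · rw [he]; exact Nat.zero_le 1)
          rw [hsum_r, hws_i] at hsge hsle
          have hnt1 : ntCount [(Sum.inl Y : N ⊕ T)] = 1 := rfl
          rw [hnt1] at hsge hsle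
          have hcnt_le : (((lss.set i []).countP (fun s => !s.isEmpty) : ℕ) : ℕ∞) ≤ k := by
            refine le_trans (Nat.cast_le.2 (by omega : (lss.set i []).countP
              (fun s => !s.isEmpty) ≤ ntCount u)) hb
          -- phase 1 : depth-first run of part i from a single nonterminal
          rw [hws_i] at hK_i
          obtain ⟨l1, va1, hdf1, hsva1⟩ := ih
            (k - ((lss.set i []).countP (fun s => !s.isEmpty) : ℕ))
            [Sum.inl Y] (lss.getD i []) (vs.getD i []) hK_i (by omega) (hterm i)
            m c [(Sum.inl Y, c)] rfl
            (by intro x o hm; simp at hm; exact hm.2) hcm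
          -- embed it into the context
          have hLR : ntCountA (ua.take i) + ntCountA (ua.drop (i + 1)) + 1 = ntCount u := by
            have h3 : ntCountA ua = ntCountA (ua.take i)
                + (ntCountA [((Sum.inl Y : N ⊕ T), c)] + ntCountA (ua.drop (i + 1))) := by
              conv_lhs => rw [hua_eq]
              rw [ntCountA_append, ntCountA_append]
              omega
            have h4 : ntCountA [((Sum.inl Y : N ⊕ T), c)] = 1 := rfl
            rw [h4] at h3
            rw [← hs, ← ntCountA_eq]
            omega
          have hks : ∀ a : ℕ,
              (a : ℕ∞) ≤ k - ((lss.set i []).countP (fun s => !s.isEmpty) : ℕ) →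
              ((a + (ntCountA (ua.take i) + ntCountA (ua.drop (i + 1))) : ℕ) : ℕ∞) ≤ k := by
            intro a ha
            have h1 := (enat_le_sub_iff hcnt_le).1 ha
            calc ((a + (ntCountA (ua.take i) + ntCountA (ua.drop (i + 1))) : ℕ) : ℕ∞)
                = (a : ℕ∞) + ((ntCountA (ua.take i) + ntCountA (ua.drop (i + 1)) : ℕ) : ℕ∞) := by
                  push_cast; ring
            _ ≤ (a : ℕ∞) + (((lss.set i []).countP (fun s => !s.isEmpty) : ℕ) : ℕ∞) :=
                  add_le_add_right (Nat.cast_le.2 (by omega)) _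
            _ ≤ k := h1
          have hctx : ∀ x o, (Sum.inl x, o) ∈ ua.take i ++ ua.drop (i + 1) →
              o ≤ m ∧ ∀ x' o', (Sum.inl x', o') ∈ [((Sum.inl Y : N ⊕ T), c)] → o ≤ o' := by
            intro x o hm'
            have ho : o = c := by
              rcases List.mem_append.1 hm' with h' | h'
              · exact hann _ _ (List.mem_of_mem_take h')
              · exact hann _ _ (List.mem_of_mem_drop h')
            subst ho
            refine ⟨hcm, ?_⟩
            intro x' o' hmm
            simp at hmm
            omega
          have hEmb0 := DFSeq_embed hdf1 (ua.take i) (ua.drop (i + 1)) k hks hctx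
          rw [← hua_eq] at hEmb0
          -- phase 2 : the remaining interleaved family
          obtain ⟨l2, hl2len, hK2⟩ := hR.toKSeq
          rw [join_set_singleton u i (vs.getD i []) hiu, hvj] at hK2
          have hswa : strip (ua.take i ++ va1 ++ ua.drop (i + 1))
              = u.take i ++ vs.getD i [] ++ u.drop (i + 1) := by
            rw [strip_append, strip_append, strip_take, strip_drop, hs, hsva1]
          have hann2 : ∀ x o, (Sum.inl x, o) ∈ ua.take i ++ va1 ++ ua.drop (i + 1) →
              o = c := by
            intro x o hm'
            rcases List.mem_append.1 hm' with h' | h'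
            · rcases List.mem_append.1 h' with h'' | h''
              · exact hann _ _ (List.mem_of_mem_take h'')
              · exfalso
                exact ntCount_zero_not_mem (by rw [hsva1]; exact hterm i) h''
            · exact hann _ _ (List.mem_of_mem_drop h')
          obtain ⟨l2', va, hdf2, hsva⟩ := ih k
            (u.take i ++ vs.getD i [] ++ u.drop (i + 1)) l2 v hK2
            (by omega) hv
            (m + (l1.map fun q => (q.1, (ua.take i).length + q.2)).length) c
            (ua.take i ++ va1 ++ ua.drop (i + 1)) hswa hann2
            (le_trans hcm (Nat.le_add_right m _))
          exact ⟨_, va, DFSeq_glue hEmb0 hdf2, hsva⟩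

end Paper
namespace Paper

variable {N T : Type}

theorem ntCount_tw (w : List T) : ntCount (tw w : Word N T) = 0 := by
  induction w with
  | nil => rfl
  | cons a w ih => rw [tw, List.map_cons, ntCount_cons]; simpa [tw] using ih

theorem zip_map_fst_snd {α β : Type*} : ∀ l : List (α × β),
    (l.map Prod.fst).zip (l.map Prod.snd) = l
  | [] => rfl
  | a :: l => by simp [zip_map_fst_snd l]

end Paper
namespace Paper

/-- Theorem 1, first item; Luker: for every grammar `G`, nonterminal `X`,
`k > 0` and terminal word `w`, there is a `k`-index step sequence deriving `w` from `X`
iff there is a `k`-index depth-first step sequence deriving `w` from `X`. -/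
theorem kIndex_iff_kIndex_depthFirst {N T : Type} (G : CFG N T) (X : N) (k : ℕ) (hk : 0 < k)
    (w : List T) :
    (∃ γ : List (CProd N T), CtrlSeq G (k : ℕ∞) [Sum.inl X] γ (tw w)) ↔
    (∃ γ : List (CProd N T), DFCtrlFrom G (k : ℕ∞) [Sum.inl X] γ (tw w)) := by
  constructor
  · rintro ⟨γ, js, hlen, hK⟩
    obtain ⟨l', va, hdf, hsva⟩ := main_df (γ.zip js).length (k : ℕ∞) [Sum.inl X]
      (γ.zip js) (tw w) hK le_rfl (ntCount_tw w) 0 0 [(Sum.inl X, 0)] rfl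
      (by intro x o hm; simp at hm; exact hm.2) le_rfl
    refine ⟨l'.map Prod.fst, l'.map Prod.snd, va, by simp, ?_, hsva⟩
    rw [zip_map_fst_snd l']
    exact hdf
  · rintro ⟨γ, js, va, hlen, hdf, hsva⟩
    have hK := DFSeq_toKSeq hdf
    rw [strip_annot, hsva] at hK
    exact ⟨γ, js, hlen, hK⟩

end Paper
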